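/- Let r be a reward function, c > 0, p ∈ (0,1), and let σ be a Borel-measurable stationary policy on [0,c] with reserve policy σ̄(x) := x − σ(x). Under i.i.d. Bernoulli arrivals B̃_p := (1−p)δ_0 + p δ_c and initial battery level b_1⁻ = 0, the expected average reward converges and lim_{n→∞} (1/n)·E_{X^n ∼ B̃_p^{⊗n}}[Σ_{t=1}^n r(σ(b_t))] = Σ_{i=1}^∞ p(1−p)^{i−1} r(σ(σ̄^{(i−1)}(c))), where σ̄^{(i)} denotes the i-fold iterate of σ̄ with σ̄^{(0)}(x) = x. -/

import Mathlib

open Set MeasureTheory Filter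

/-- Battery levels: `battery c σ x xs t` is the battery level `b_{t+1}` (just after the
arrival of `xs t`) when the initial level is `b_{1⁻} = x`, the arrivals are
`xs 0, xs 1, …`, and the stationary policy `σ` is used. -/
noncomputable def battery (c : ℝ) (σ : ℝ → ℝ) (x : ℝ) (xs : ℕ → ℝ) : ℕ → ℝ
  | 0 => min (x + xs 0) c
  | t + 1 => min (battery c σ x xs t - σ (battery c σ x xs t) + xs (t + 1)) c

/-- The `n`-horizon total reward `R_n(σ, (x_1, …, x_n), x) = ∑_{t=1}^n r (σ (b_t))`. -/
noncomputable def totalReward (r : ℝ → ℝ) (c : ℝ) (σ : ℝ → ℝ) (x : ℝ) (xs : ℕ → ℝ)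
    (n : ℕ) : ℝ :=
  ∑ t ∈ Finset.range n, r (σ (battery c σ x xs t))

/-- The Bernoulli energy-arrival distribution `B̃_p = (1-p) δ_0 + p δ_c`. -/
noncomputable def bern (c p : ℝ) : Measure ℝ :=
  ENNReal.ofReal (1 - p) • Measure.dirac 0 + ENNReal.ofReal p • Measure.dirac c


section Aux

variable {c p : ℝ} {σ : ℝ → ℝ}

lemma battery_mem_Icc (hc : 0 ≤ c) (hσ : ∀ x ∈ Icc (0:ℝ) c, 0 ≤ σ x ∧ σ x ≤ x)
    {xs : ℕ → ℝ} (hxs : ∀ i, 0 ≤ xs i) :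
    ∀ t, battery c σ 0 xs t ∈ Icc (0:ℝ) c := by
  intro t
  induction t with
  | zero =>
    exact ⟨le_min (by simpa using hxs 0) hc, min_le_right _ _⟩
  | succ t ih =>
    refine ⟨le_min (add_nonneg (sub_nonneg.2 (hσ _ ih).2) (hxs (t+1))) hc, min_le_right _ _⟩

lemma iter_mem_Icc (hc : 0 ≤ c) (hσ : ∀ x ∈ Icc (0:ℝ) c, 0 ≤ σ x ∧ σ x ≤ x) :
    ∀ j, (fun y => y - σ y)^[j] c ∈ Icc (0:ℝ) c := by
  intro j
  induction j with
  | zero => exact ⟨hc, le_rfl⟩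
  | succ j ih =>
    rw [Function.iterate_succ_apply']
    exact ⟨sub_nonneg.2 (hσ _ ih).2, le_trans (sub_le_self _ (hσ _ ih).1) ih.2⟩

lemma battery_all_zero (hc : 0 ≤ c) (hσ0 : σ 0 = 0) {xs : ℕ → ℝ} :
    ∀ t, (∀ i ≤ t, xs i = 0) → battery c σ 0 xs t = 0 := by
  intro t
  induction t with
  | zero => intro h; simp [battery, h 0 le_rfl, hc]
  | succ t ih =>
    intro h
    have hb : battery c σ 0 xs t = 0 := ih fun i hi => h i (hi.trans (Nat.le_succ t))
    simp [battery, hb, hσ0, h (t+1) le_rfl, hc]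

lemma battery_eq_iter (hc : 0 ≤ c) (hσ : ∀ x ∈ Icc (0:ℝ) c, 0 ≤ σ x ∧ σ x ≤ x)
    {xs : ℕ → ℝ} (hxs : ∀ i, 0 ≤ xs i) :
    ∀ j t, j ≤ t → xs (t - j) = c → (∀ k, t - j < k → k ≤ t → xs k = 0) →
      battery c σ 0 xs t = (fun y => y - σ y)^[j] c := by
  intro j
  induction j with
  | zero =>
    intro t _ hcval _
    simp only [Nat.sub_zero] at hcval
    cases t with
    | zero => simp [battery, hcval, hc]
    | succ s =>
      have hb := battery_mem_Icc hc hσ hxs s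
      have h0 : 0 ≤ battery c σ 0 xs s - σ (battery c σ 0 xs s) := sub_nonneg.2 (hσ _ hb).2
      simp only [battery, hcval, Function.iterate_zero_apply]
      exact min_eq_right (le_add_of_nonneg_left h0)
  | succ j ih =>
    intro t hjt hcval hz
    obtain ⟨s, rfl⟩ : ∃ s, t = s + 1 := ⟨t - 1, by omega⟩
    have hxt : xs (s + 1) = 0 := hz (s + 1) (by omega) le_rfl
    have hbs : battery c σ 0 xs s = (fun y => y - σ y)^[j] c := by
      refine ih s (by omega) ?_ ?_
      · have : s - j = s + 1 - (j + 1) := by omega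
        rw [this]; exact hcval
      · intro k hk1 hk2; exact hz k (by omega) (by omega)
    have hb := battery_mem_Icc hc hσ hxs s
    have h1 : battery c σ 0 xs s - σ (battery c σ 0 xs s) ≤ c :=
      le_trans (sub_le_self _ (hσ _ hb).1) hb.2
    simp only [battery, hxt, add_zero, Function.iterate_succ_apply']
    rw [min_eq_left h1, hbs]

lemma bern_apply_singleton_c (hc : c ≠ 0) : bern c p {c} = ENNReal.ofReal p := by
  simp [bern, Measure.dirac_apply, Set.indicator_apply, hc, Ne.symm hc]

lemma bern_apply_singleton_zero (hc : c ≠ 0) : bern c p {0} = ENNReal.ofReal (1 - p) := by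
  simp [bern, Measure.dirac_apply, Set.indicator_apply, hc]

lemma bern_apply_compl (hc : c ≠ 0) : bern c p ({0, c} : Set ℝ)ᶜ = 0 := by
  simp [bern, Measure.dirac_apply, Set.indicator_apply]

lemma bern_isProbabilityMeasure (hp : p ∈ Ioo (0:ℝ) 1) :
    IsProbabilityMeasure (bern c p) := by
  constructor
  simp only [bern, Measure.add_apply, Measure.smul_apply, smul_eq_mul,
    measure_univ, mul_one]
  rw [← ENNReal.ofReal_add (by linarith [hp.2]) (le_of_lt hp.1)]
  norm_num

lemma integral_step (hc : 0 < c) (hp : p ∈ Ioo (0:ℝ) 1)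
    (hσ : ∀ x ∈ Icc (0:ℝ) c, 0 ≤ σ x ∧ σ x ≤ x)
    (r : ℝ → ℝ) (hr0 : r 0 = 0)
    {n t : ℕ} (ht : t < n) :
    Integrable (fun xs : Fin n → ℝ =>
        r (σ (battery c σ 0 (fun i => if h : i < n then xs ⟨i, h⟩ else 0) t)))
        (Measure.pi fun _ : Fin n => bern c p) ∧
    ∫ xs : Fin n → ℝ,
        r (σ (battery c σ 0 (fun i => if h : i < n then xs ⟨i, h⟩ else 0) t))
        ∂(Measure.pi fun _ : Fin n => bern c p)
      = ∑ j ∈ Finset.range (t+1), p * (1-p)^j * r (σ ((fun y => y - σ y)^[j] c)) := by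
  classical
  haveI := bern_isProbabilityMeasure (c := c) hp
  have hc0 : c ≠ 0 := ne_of_gt hc
  set μ : Measure (Fin n → ℝ) := Measure.pi fun _ : Fin n => bern c p with hμ
  set a : ℕ → ℝ := fun j => r (σ ((fun y => y - σ y)^[j] c)) with ha
  have hσ0 : σ 0 = 0 := le_antisymm (hσ 0 ⟨le_rfl, hc.le⟩).2 (hσ 0 ⟨le_rfl, hc.le⟩).1
  set S : ℕ → ℕ → Set ℝ := fun j k =>
    if k = t - j then {c} else if t - j < k ∧ k ≤ t then {0} else univ with hS
  set E : ℕ → Set (Fin n → ℝ) := fun j => univ.pi fun i => S j i.val with hE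
  have hEm : ∀ j, MeasurableSet (E j) := by
    intro j
    refine MeasurableSet.univ_pi fun i => ?_
    simp only [hS]
    split_ifs <;> simp
  have hEμ : ∀ j ≤ t, μ (E j) = ENNReal.ofReal p * ENNReal.ofReal (1 - p) ^ j := by
    intro j hjt
    rw [hμ, hE, Measure.pi_pi]
    have h1 : (∏ i : Fin n, bern c p (S j i.val))
        = ∏ k ∈ Finset.range n, bern c p (S j k) :=
      Fin.prod_univ_eq_prod_range (fun k => bern c p (S j k)) n
    rw [h1]
    have hsub : insert (t - j) (Finset.Ioc (t - j) t) ⊆ Finset.range n := by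
      intro k hk
      simp only [Finset.mem_insert, Finset.mem_Ioc] at hk
      rcases hk with rfl | ⟨hk1, hk2⟩
      · exact Finset.mem_range.2 (by omega)
      · exact Finset.mem_range.2 (by omega)
    rw [← Finset.prod_subset hsub (by
      intro k _ hk
      simp only [Finset.mem_insert, Finset.mem_Ioc, not_or, not_and_or, not_lt, not_le] at hk
      have : S j k = univ := by
        simp only [hS]
        rw [if_neg hk.1, if_neg]
        rcases hk.2 with h | h
        · intro hh; omega
        · intro hh; omega
      rw [this]
      exact measure_univ)]
    rw [Finset.prod_insert (by simp)]
    have hc' : S j (t - j) = {c} := by simp [hS]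
    have h0 : ∀ k ∈ Finset.Ioc (t - j) t, bern c p (S j k) = ENNReal.ofReal (1 - p) := by
      intro k hk
      simp only [Finset.mem_Ioc] at hk
      have : S j k = {0} := by
        simp only [hS]
        rw [if_neg (by omega), if_pos ⟨hk.1, hk.2⟩]
      rw [this, bern_apply_singleton_zero hc0]
    rw [hc', bern_apply_singleton_c hc0, Finset.prod_congr rfl h0, Finset.prod_const,
      Nat.card_Ioc]
    have hjj : t - (t - j) = j := by omega
    rw [hjj]
  set g : (Fin n → ℝ) → ℝ :=
    fun xs => ∑ j ∈ Finset.range (t + 1), (E j).indicator (fun _ => a j) xs with hg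
  have hg_int : Integrable g μ :=
    integrable_finset_sum _ fun j _ => (integrable_const (a j)).indicator (hEm j)
  -- a.e. coordinates in {0, c}
  have haY : ∀ᵐ xs ∂μ, ∀ i : Fin n, xs i = 0 ∨ xs i = c := by
    rw [ae_all_iff]
    intro i
    rw [ae_iff]
    have hset : {xs : Fin n → ℝ | ¬(xs i = 0 ∨ xs i = c)}
        = univ.pi fun k => if k = i then ({0, c} : Set ℝ)ᶜ else univ := by
      ext xs
      simp only [mem_setOf_eq, mem_univ_pi]
      constructor
      · intro h k
        by_cases hk : k = i
        · subst hk; simp only [if_pos rfl, mem_compl_iff, mem_insert_iff, mem_singleton_iff]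
          tauto
        · simp [hk]
      · intro h
        have := h i
        simp only [if_pos rfl, mem_compl_iff, mem_insert_iff, mem_singleton_iff] at this
        tauto
    rw [hset, hμ, Measure.pi_pi]
    refine Finset.prod_eq_zero (Finset.mem_univ i) ?_
    rw [if_pos rfl]
    exact bern_apply_compl hc0
  have hae : (fun xs : Fin n → ℝ =>
      r (σ (battery c σ 0 (fun i => if h : i < n then xs ⟨i, h⟩ else 0) t))) =ᵐ[μ] g := by
    filter_upwards [haY] with xs hxs
    set y : ℕ → ℝ := fun i => if h : i < n then xs ⟨i, h⟩ else 0 with hy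
    have hyv : ∀ i, y i = 0 ∨ y i = c := by
      intro i
      by_cases h : i < n
      · simpa [hy, h] using hxs ⟨i, h⟩
      · left; simp [hy, h]
    have hy0 : ∀ i, 0 ≤ y i := by
      intro i; rcases hyv i with h | h <;> simp [h, hc.le]
    have hyx : ∀ i : Fin n, y i.val = xs i := by
      intro i; simp [hy, i.isLt]
    by_cases hall : ∀ i ≤ t, y i = 0
    · rw [battery_all_zero hc.le hσ0 t hall, hσ0, hr0]
      rw [hg]
      symm
      refine Finset.sum_eq_zero fun j hj => ?_
      rw [Set.indicator_of_notMem]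
      intro hmem
      rw [hE, mem_univ_pi] at hmem
      have hlt : t - j < n := lt_of_le_of_lt (Nat.sub_le t j) ht
      have := hmem ⟨t - j, hlt⟩
      simp only [hS, if_pos rfl, mem_singleton_iff] at this
      have h0 : y (t - j) = 0 := hall _ (Nat.sub_le t j)
      rw [hyx ⟨t - j, hlt⟩] at h0
      exact hc0 (h0 ▸ this).symm
    · push_neg at hall
      obtain ⟨i0, hi0t, hi0⟩ := hall
      have hi0c : y i0 = c := (hyv i0).resolve_left hi0
      set m : ℕ := Nat.findGreatest (fun k => y k = c) t with hm
      have hmc : y m = c := by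
        have h' := Nat.findGreatest_spec (P := fun k => y k = c) hi0t hi0c
        simpa [hm] using h'
      have hmt : m ≤ t := Nat.findGreatest_le t
      have hzr : ∀ k, m < k → k ≤ t → y k = 0 := fun k h1 h2 =>
        (hyv k).resolve_right (Nat.findGreatest_is_greatest (P := fun k => y k = c) h1 h2)
      have hbat : battery c σ 0 y t = (fun y => y - σ y)^[t - m] c := by
        refine battery_eq_iter hc.le hσ hy0 (t - m) t (Nat.sub_le t m) ?_ ?_
        · have : t - (t - m) = m := by omega
          rw [this]; exact hmc
        · intro k hk1 hk2
          exact hzr k (by omega) hk2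
      rw [hbat, hg]
      symm
      beta_reduce
      rw [Finset.sum_eq_single (t - m)]
      · have hmem : xs ∈ E (t - m) := by
          rw [hE, mem_univ_pi]
          intro i
          simp only [hS]
          by_cases h1 : i.val = t - (t - m)
          · rw [if_pos h1, mem_singleton_iff, ← hyx i, h1]
            have : t - (t - m) = m := by omega
            rw [this]; exact hmc
          · rw [if_neg h1]
            by_cases h2 : t - (t - m) < i.val ∧ i.val ≤ t
            · rw [if_pos h2, mem_singleton_iff, ← hyx i]
              exact hzr i.val (by omega) h2.2
            · rw [if_neg h2]; trivial
        rw [Set.indicator_of_mem hmem]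
      · intro j hj hjne
        rw [Set.indicator_of_notMem]
        intro hmem
        rw [hE, mem_univ_pi] at hmem
        have hjt : j ≤ t := by simpa [Nat.lt_succ_iff] using hj
        have hlt : t - j < n := lt_of_le_of_lt (Nat.sub_le t j) ht
        have h1 := hmem ⟨t - j, hlt⟩
        simp only [hS, if_pos rfl, mem_singleton_iff] at h1
        have hyc : y (t - j) = c := by rw [hyx ⟨t - j, hlt⟩]; exact h1
        -- maximality: t - j ≤ m
        have hle : t - j ≤ m := by
          by_contra hgt
          push_neg at hgt
          exact hc0 ((hzr (t - j) hgt (Nat.sub_le t j)) ▸ hyc).symm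
        have hne : t - j < m := by
          rcases lt_or_eq_of_le hle with h | h
          · exact h
          · exfalso; apply hjne; omega
        have h2 := hmem ⟨m, lt_of_le_of_lt hmt ht⟩
        simp only [hS] at h2
        rw [if_neg (show ¬ m = t - j by omega),
          if_pos (show t - j < m ∧ m ≤ t from ⟨hne, hmt⟩), mem_singleton_iff] at h2
        have hym : y m = 0 := by
          rw [hyx ⟨m, lt_of_le_of_lt hmt ht⟩]; exact h2
        rw [hym] at hmc
        exact hc0 hmc.symm
      · intro h
        exfalso; apply h
        simp only [Finset.mem_range]
        omega
  have hraw_int : Integrable (fun xs : Fin n → ℝ =>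
      r (σ (battery c σ 0 (fun i => if h : i < n then xs ⟨i, h⟩ else 0) t))) μ :=
    hg_int.congr hae.symm
  refine ⟨hraw_int, ?_⟩
  rw [integral_congr_ae hae, hg]
  rw [integral_finset_sum _ fun j _ => (integrable_const (a j)).indicator (hEm j)]
  refine Finset.sum_congr rfl fun j hj => ?_
  have hjt : j ≤ t := by simpa [Nat.lt_succ_iff] using hj
  rw [integral_indicator_const _ (hEm j), measureReal_def, hEμ j hjt]
  rw [smul_eq_mul, ENNReal.toReal_mul, ENNReal.toReal_pow,
    ENNReal.toReal_ofReal hp.1.le, ENNReal.toReal_ofReal (by linarith [hp.2] : (0:ℝ) ≤ 1 - p)]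
  try ring

end Aux

/-- **Asymptotic expected average reward under Bernoulli arrivals** (Lemma 2). For a
reward function `r`, a Borel-measurable stationary policy `σ` on `[0, c]`, and i.i.d.
Bernoulli arrivals `B̃_p` with initial battery level `0`, the expected average reward
converges to `∑_{i=1}^∞ p (1-p)^{i-1} r (σ (σ̄^{(i-1)}(c)))`, where `σ̄ x = x - σ x`. -/
theorem bernoulli_average_reward
    (r : ℝ → ℝ)
    (hr_zero : r 0 = 0)
    (hr_nonneg : ∀ x : ℝ, 0 ≤ x → 0 ≤ r x)
    (hr_mono : MonotoneOn r (Ici (0 : ℝ)))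
    (hr_lip : ∃ K : NNReal, LipschitzOnWith K r (Ici (0 : ℝ)))
    (hr_concave : ConcaveOn ℝ (Ici (0 : ℝ)) r)
    (c : ℝ) (hc : 0 < c) (p : ℝ) (hp : p ∈ Ioo (0 : ℝ) 1)
    (σ : ℝ → ℝ) (hσ_meas : Measurable σ)
    (hσ_pol : ∀ x ∈ Icc (0 : ℝ) c, 0 ≤ σ x ∧ σ x ≤ x) :
    Tendsto
      (fun n : ℕ => (1 / (n : ℝ)) *
        ∫ xs : Fin n → ℝ,
          totalReward r c σ 0 (fun t => if h : t < n then xs ⟨t, h⟩ else 0) n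
          ∂(Measure.pi fun _ : Fin n => bern c p))
      atTop
      (nhds (∑' i : ℕ, p * (1 - p) ^ i * r (σ ((fun y => y - σ y)^[i] c)))) := by
  classical
  set a : ℕ → ℝ := fun j => p * (1 - p) ^ j * r (σ ((fun y => y - σ y)^[j] c)) with ha
  have hp1 : (0:ℝ) ≤ 1 - p := by linarith [hp.2]
  have hiter : ∀ j, (fun y => y - σ y)^[j] c ∈ Icc (0:ℝ) c := iter_mem_Icc hc.le hσ_pol
  have hσmem : ∀ j, σ ((fun y => y - σ y)^[j] c) ∈ Icc (0:ℝ) c := fun j =>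
    ⟨(hσ_pol _ (hiter j)).1, le_trans (hσ_pol _ (hiter j)).2 (hiter j).2⟩
  have hsum : Summable a := by
    refine Summable.of_nonneg_of_le (fun j => ?_) (fun j => ?_)
      ((summable_geometric_of_lt_one hp1 (by linarith [hp.1])).mul_left (p * r c))
    · exact mul_nonneg (mul_nonneg hp.1.le (pow_nonneg hp1 j))
        (hr_nonneg _ (hσmem j).1)
    · have h1 : r (σ ((fun y => y - σ y)^[j] c)) ≤ r c :=
        hr_mono (hσmem j).1 (le_of_lt hc) (hσmem j).2
      calc p * (1 - p) ^ j * r (σ ((fun y => y - σ y)^[j] c))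
          ≤ p * (1 - p) ^ j * r c := by
            apply mul_le_mul_of_nonneg_left h1
              (mul_nonneg hp.1.le (pow_nonneg hp1 j))
        _ = p * r c * (1 - p) ^ j := by ring
  have hu : Tendsto (fun t : ℕ => ∑ j ∈ Finset.range (t + 1), a j) atTop
      (nhds (∑' i, a i)) :=
    (hsum.hasSum.tendsto_sum_nat).comp (tendsto_add_atTop_nat 1)
  have key : ∀ n : ℕ,
      (∫ xs : Fin n → ℝ,
        totalReward r c σ 0 (fun t => if h : t < n then xs ⟨t, h⟩ else 0) n
        ∂(Measure.pi fun _ : Fin n => bern c p))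
      = ∑ t ∈ Finset.range n, ∑ j ∈ Finset.range (t + 1), a j := by
    intro n
    simp only [totalReward]
    rw [integral_finset_sum _ fun t htn =>
      (integral_step hc hp hσ_pol r hr_zero (Finset.mem_range.1 htn)).1]
    exact Finset.sum_congr rfl fun t htn =>
      (integral_step hc hp hσ_pol r hr_zero (Finset.mem_range.1 htn)).2
  have heq : (fun n : ℕ => (1 / (n : ℝ)) *
        ∫ xs : Fin n → ℝ,
          totalReward r c σ 0 (fun t => if h : t < n then xs ⟨t, h⟩ else 0) n
          ∂(Measure.pi fun _ : Fin n => bern c p))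
      = fun n : ℕ => ((n : ℝ)⁻¹) * ∑ t ∈ Finset.range n,
          (fun t => ∑ j ∈ Finset.range (t + 1), a j) t := by
    funext n
    rw [key n, one_div]
  rw [heq]
  exact hu.cesaro
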